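/- In the LLG domain, if the global bidder bids β̄ on {1,2}, the local bidders make simple bids and jointly win (b₁({1}) + b₂({2}) ≥ β̄), then the VCG-nearest payment of local bidder i equals (1/2)·(VCG_i + min(b_i({i}), β̄)), where VCG_i = β̄ − min(b_j({j}), β̄) for the other local bidder j. -/

import Mathlib

open Finset

/-- Maximum reported social welfare achievable by the bidders in `L`
using only the goods in `K`. -/
noncomputable def W {ι γ : Type*} [DecidableEq γ] (b : ι → Finset γ → ℝ)
    (L : Finset ι) (K : Finset γ) : ℝ :=
  sSup {w : ℝ | ∃ x : ι → Finset γ,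
    (∀ i, x i ⊆ K) ∧ (∀ i j, i ≠ j → Disjoint (x i) (x j)) ∧
    w = ∑ i ∈ L, b i (x i)}

/-- Single-minded XOR bid of `β` on the bundle `S` (with free disposal). -/
def sm {γ : Type*} [DecidableEq γ] (S : Finset γ) (β : ℝ) : Finset γ → ℝ :=
  fun K => if S ⊆ K then β else 0

/-- The LLG bid profile: locals bid `β₁` on `{0}` and `β₂` on `{1}`,
the global bidder bids `βbar` on `{0,1}`. -/
noncomputable def llgBids (β₁ β₂ βbar : ℝ) : Fin 3 → Finset (Fin 2) → ℝ :=
  ![sm {0} β₁, sm {1} β₂, sm {0, 1} βbar]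

/-- The allocation in which both locals win their singleton bundle. -/
def llgAlloc : Fin 3 → Finset (Fin 2) := ![{0}, {1}, ∅]

/-- `p` is an outcome in the revealed core: payments are nonnegative,
individually rational, and satisfy all coalitional core constraints. -/
noncomputable def inCore (b : Fin 3 → Finset (Fin 2) → ℝ)
    (x : Fin 3 → Finset (Fin 2)) (p : Fin 3 → ℝ) : Prop :=
  (∀ i, 0 ≤ p i) ∧ (∀ i, p i ≤ b i (x i)) ∧
  ∀ L : Finset (Fin 3),
    W b L Finset.univ - W b L (L.biUnion x) ≤ ∑ j ∈ Lᶜ, p j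

lemma W_eq (b : Fin 3 → Finset (Fin 2) → ℝ) (L : Finset (Fin 3)) (K : Finset (Fin 2)) (v : ℝ)
    (hmem : ∃ x : Fin 3 → Finset (Fin 2),
      (∀ i, x i ⊆ K) ∧ (∀ i j, i ≠ j → Disjoint (x i) (x j)) ∧ v = ∑ i ∈ L, b i (x i))
    (hub : ∀ x : Fin 3 → Finset (Fin 2), (∀ i, x i ⊆ K) →
      (∀ i j, i ≠ j → Disjoint (x i) (x j)) → ∑ i ∈ L, b i (x i) ≤ v) :
    W b L K = v := by
  apply IsGreatest.csSup_eq
  exact ⟨hmem, by rintro w ⟨x, hx1, hx2, rfl⟩; exact hub x hx1 hx2⟩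

section
variable (β₁ β₂ βbar : ℝ) (h₁ : 0 ≤ β₁) (h₂ : 0 ≤ β₂) (h₃ : 0 ≤ βbar)

lemma Wemp (K : Finset (Fin 2)) : W (llgBids β₁ β₂ βbar) ∅ K = 0 := by
  apply W_eq
  · exact ⟨fun _ => ∅, fun i => empty_subset _, by simp, by simp⟩
  · intro x _ _; simp

include h₁ in
lemma W0u : W (llgBids β₁ β₂ βbar) {0} univ = β₁ := by
  apply W_eq
  · exact ⟨llgAlloc, fun i => subset_univ _, by decide, by simp [llgBids, llgAlloc, sm]⟩
  · intro x hx1 hx2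
    simp only [sum_singleton, llgBids, sm, Matrix.cons_val_zero]
    split_ifs <;> linarith

include h₁ in
lemma W00 : W (llgBids β₁ β₂ βbar) {0} {0} = β₁ := by
  apply W_eq
  · exact ⟨![{0}, ∅, ∅], by decide, by decide, by simp [llgBids, sm]⟩
  · intro x hx1 hx2
    simp only [sum_singleton, llgBids, sm, Matrix.cons_val_zero]
    split_ifs <;> linarith

include h₂ in
lemma W1u : W (llgBids β₁ β₂ βbar) {1} univ = β₂ := by
  apply W_eq
  · exact ⟨llgAlloc, fun i => subset_univ _, by decide, by simp [llgBids, llgAlloc, sm]⟩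
  · intro x hx1 hx2
    simp only [sum_singleton, llgBids, sm, Matrix.cons_val_one, Matrix.head_cons, Matrix.cons_val_zero]
    split_ifs <;> linarith

include h₂ in
lemma W11 : W (llgBids β₁ β₂ βbar) {1} {1} = β₂ := by
  apply W_eq
  · exact ⟨![∅, {1}, ∅], by decide, by decide, by simp [llgBids, sm]⟩
  · intro x hx1 hx2
    simp only [sum_singleton, llgBids, sm, Matrix.cons_val_one, Matrix.head_cons, Matrix.cons_val_zero]
    split_ifs <;> linarith

include h₃ in
lemma W2u : W (llgBids β₁ β₂ βbar) {2} univ = βbar := by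
  apply W_eq
  · refine ⟨![∅, ∅, (univ : Finset (Fin 2))], fun i => subset_univ _, by decide, ?_⟩
    simp [llgBids, sm, show ({0,1} : Finset (Fin 2)) ⊆ univ from subset_univ _]
  · intro x hx1 hx2
    rw [sum_singleton]
    show sm {0, 1} βbar (x 2) ≤ βbar
    rw [sm]; split_ifs <;> linarith

lemma W2e : W (llgBids β₁ β₂ βbar) {2} ∅ = 0 := by
  apply W_eq
  · exact ⟨fun _ => ∅, fun i => empty_subset _, by simp, by simp [llgBids, sm]⟩
  · intro x hx1 hx2
    rw [sum_singleton]
    show sm {0, 1} βbar (x 2) ≤ 0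
    rw [sm]; split_ifs with h
    · exact absurd (hx1 2 (h (show (0:Fin 2) ∈ ({0,1}:Finset (Fin 2)) by decide))) (by simp)
    · exact le_refl 0
end
section
variable (β₁ β₂ βbar : ℝ) (h₁ : 0 ≤ β₁) (h₂ : 0 ≤ β₂) (h₃ : 0 ≤ βbar)

include h₁ h₃ in
lemma W02u : W (llgBids β₁ β₂ βbar) {0, 2} univ = max β₁ βbar := by
  apply W_eq
  · rcases le_total β₁ βbar with h | h
    · refine ⟨![∅, ∅, (univ : Finset (Fin 2))], fun i => subset_univ _, by decide, ?_⟩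
      rw [sum_pair (by decide : (0:Fin 3) ≠ 2)]
      show max β₁ βbar = sm {0} β₁ (∅ : Finset (Fin 2)) + sm {0, 1} βbar (univ : Finset (Fin 2))
      rw [sm, sm, if_neg (by decide), if_pos (subset_univ _), max_eq_right h, zero_add]
    · refine ⟨![{0}, ∅, ∅], fun i => subset_univ _, by decide, ?_⟩
      rw [sum_pair (by decide : (0:Fin 3) ≠ 2)]
      show max β₁ βbar = sm {0} β₁ {0} + sm {0, 1} βbar (∅ : Finset (Fin 2))
      rw [sm, sm, if_pos (by decide), if_neg (by decide), max_eq_left h, add_zero]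
  · intro x hx1 hx2
    rw [sum_pair (by decide : (0:Fin 3) ≠ 2)]
    show sm {0} β₁ (x 0) + sm {0, 1} βbar (x 2) ≤ max β₁ βbar
    rw [sm, sm]
    split_ifs with ha hb hb
    · exact absurd (Finset.disjoint_left.mp (hx2 0 2 (by decide))
        (ha (show (0:Fin 2) ∈ ({0}:Finset (Fin 2)) by decide))
        (hb (show (0:Fin 2) ∈ ({0,1}:Finset (Fin 2)) by decide))) (fun h => h)
    · simp only [add_zero, zero_add]; exact le_max_left β₁ βbar
    · simp only [add_zero, zero_add]; exact le_max_right β₁ βbar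
    · simp [le_max_iff]; left; exact h₁
end
section
variable (β₁ β₂ βbar : ℝ) (h₁ : 0 ≤ β₁) (h₂ : 0 ≤ β₂) (h₃ : 0 ≤ βbar)

include h₁ in
lemma W020 : W (llgBids β₁ β₂ βbar) {0, 2} {0} = β₁ := by
  apply W_eq
  · refine ⟨![{0}, ∅, ∅], by decide, by decide, ?_⟩
    rw [sum_pair (by decide : (0:Fin 3) ≠ 2)]
    show β₁ = sm {0} β₁ {0} + sm {0, 1} βbar (∅ : Finset (Fin 2))
    rw [sm, sm, if_pos (by decide), if_neg (by decide), add_zero]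
  · intro x hx1 hx2
    rw [sum_pair (by decide : (0:Fin 3) ≠ 2)]
    show sm {0} β₁ (x 0) + sm {0, 1} βbar (x 2) ≤ β₁
    rw [sm, sm]
    split_ifs with ha hb hb
    · exact absurd (hx1 2 (hb (show (1:Fin 2) ∈ ({0,1}:Finset (Fin 2)) by decide)))
        (by simp)
    · linarith
    · exact absurd (hx1 2 (hb (show (1:Fin 2) ∈ ({0,1}:Finset (Fin 2)) by decide)))
        (by simp)
    · linarith

include h₂ h₃ in
lemma W12u : W (llgBids β₁ β₂ βbar) {1, 2} univ = max β₂ βbar := by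
  apply W_eq
  · rcases le_total β₂ βbar with h | h
    · refine ⟨![∅, ∅, (univ : Finset (Fin 2))], fun i => subset_univ _, by decide, ?_⟩
      rw [sum_pair (by decide : (1:Fin 3) ≠ 2)]
      show max β₂ βbar = sm {1} β₂ (∅ : Finset (Fin 2)) + sm {0, 1} βbar (univ : Finset (Fin 2))
      rw [sm, sm, if_neg (by decide), if_pos (subset_univ _), max_eq_right h, zero_add]
    · refine ⟨![∅, {1}, ∅], fun i => subset_univ _, by decide, ?_⟩
      rw [sum_pair (by decide : (1:Fin 3) ≠ 2)]
      show max β₂ βbar = sm {1} β₂ {1} + sm {0, 1} βbar (∅ : Finset (Fin 2))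
      rw [sm, sm, if_pos (by decide), if_neg (by decide), max_eq_left h, add_zero]
  · intro x hx1 hx2
    rw [sum_pair (by decide : (1:Fin 3) ≠ 2)]
    show sm {1} β₂ (x 1) + sm {0, 1} βbar (x 2) ≤ max β₂ βbar
    rw [sm, sm]
    split_ifs with ha hb hb
    · exact absurd (Finset.disjoint_left.mp (hx2 1 2 (by decide))
        (ha (show (1:Fin 2) ∈ ({1}:Finset (Fin 2)) by decide))
        (hb (show (1:Fin 2) ∈ ({0,1}:Finset (Fin 2)) by decide))) (fun h => h)
    · simp only [add_zero]; exact le_max_left β₂ βbar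
    · simp only [zero_add]; exact le_max_right β₂ βbar
    · simp [le_max_iff]; left; exact h₂

include h₂ in
lemma W121 : W (llgBids β₁ β₂ βbar) {1, 2} {1} = β₂ := by
  apply W_eq
  · refine ⟨![∅, {1}, ∅], by decide, by decide, ?_⟩
    rw [sum_pair (by decide : (1:Fin 3) ≠ 2)]
    show β₂ = sm {1} β₂ {1} + sm {0, 1} βbar (∅ : Finset (Fin 2))
    rw [sm, sm, if_pos (by decide), if_neg (by decide), add_zero]
  · intro x hx1 hx2
    rw [sum_pair (by decide : (1:Fin 3) ≠ 2)]
    show sm {1} β₂ (x 1) + sm {0, 1} βbar (x 2) ≤ β₂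
    rw [sm, sm]
    split_ifs with ha hb hb
    · exact absurd (hx1 2 (hb (show (0:Fin 2) ∈ ({0,1}:Finset (Fin 2)) by decide)))
        (by simp)
    · linarith
    · exact absurd (hx1 2 (hb (show (0:Fin 2) ∈ ({0,1}:Finset (Fin 2)) by decide)))
        (by simp)
    · linarith
end
lemma finset_fin3_cases (L : Finset (Fin 3)) :
    L = ∅ ∨ L = {0} ∨ L = {1} ∨ L = {2} ∨ L = {0,1} ∨ L = {0,2} ∨ L = {1,2} ∨ L = univ := by
  revert L; decide

section
variable (β₁ β₂ βbar : ℝ) (h₁ : 0 ≤ β₁) (h₂ : 0 ≤ β₂) (h₃ : 0 ≤ βbar)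
    (hwin : βbar ≤ β₁ + β₂)

include h₁ h₂ h₃ hwin in
lemma core_iff (q : Fin 3 → ℝ) :
    inCore (llgBids β₁ β₂ βbar) llgAlloc q ↔
      0 ≤ q 0 ∧ 0 ≤ q 1 ∧ q 2 = 0 ∧ q 0 ≤ β₁ ∧ q 1 ≤ β₂ ∧
      βbar ≤ q 0 + q 1 ∧ max β₁ βbar - β₁ ≤ q 1 ∧ max β₂ βbar - β₂ ≤ q 0 := by
  have e0 : llgBids β₁ β₂ βbar 0 (llgAlloc 0) = β₁ := by
    show sm {0} β₁ {0} = β₁; rw [sm, if_pos (by decide)]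
  have e1 : llgBids β₁ β₂ βbar 1 (llgAlloc 1) = β₂ := by
    show sm {1} β₂ {1} = β₂; rw [sm, if_pos (by decide)]
  have e2 : llgBids β₁ β₂ βbar 2 (llgAlloc 2) = 0 := by
    show sm {0,1} βbar ∅ = 0; rw [sm, if_neg (by decide)]
  constructor
  · rintro ⟨hn, hIR, hL⟩
    have hq2 : q 2 = 0 := le_antisymm (e2 ▸ hIR 2) (hn 2)
    have h5 := hL {2}
    rw [show (({2}:Finset (Fin 3)).biUnion llgAlloc) = (∅:Finset (Fin 2)) from by decide,
      W2u β₁ β₂ βbar h₃, W2e, show ({2}:Finset (Fin 3))ᶜ = {0,1} from by decide,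
      sum_pair (by decide : (0:Fin 3) ≠ 1)] at h5
    have h6 := hL {1,2}
    rw [show (({1,2}:Finset (Fin 3)).biUnion llgAlloc) = ({1}:Finset (Fin 2)) from by decide,
      W12u β₁ β₂ βbar h₂ h₃, W121 β₁ β₂ βbar h₂,
      show ({1,2}:Finset (Fin 3))ᶜ = {0} from by decide, sum_singleton] at h6
    have h7 := hL {0,2}
    rw [show (({0,2}:Finset (Fin 3)).biUnion llgAlloc) = ({0}:Finset (Fin 2)) from by decide,
      W02u β₁ β₂ βbar h₁ h₃, W020 β₁ β₂ βbar h₁,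
      show ({0,2}:Finset (Fin 3))ᶜ = {1} from by decide, sum_singleton] at h7
    exact ⟨hn 0, hn 1, hq2, e0 ▸ hIR 0, e1 ▸ hIR 1, by linarith, by linarith, by linarith⟩
  · rintro ⟨c1, c2, c3, c4, c5, c6, c7, c8⟩
    refine ⟨?_, ?_, ?_⟩
    · intro i; fin_cases i
      · exact c1
      · exact c2
      · exact c3.ge
    · intro i; fin_cases i
      · exact e0 ▸ c4
      · exact e1 ▸ c5
      · exact e2 ▸ c3.le
    · intro L
      rcases finset_fin3_cases L with rfl | rfl | rfl | rfl | rfl | rfl | rfl | rfl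
      · rw [show ((∅:Finset (Fin 3)).biUnion llgAlloc) = (∅:Finset (Fin 2)) from by decide,
          Wemp, Wemp, show (∅:Finset (Fin 3))ᶜ = univ from by decide, Fin.sum_univ_three]
        linarith
      · rw [show (({0}:Finset (Fin 3)).biUnion llgAlloc) = ({0}:Finset (Fin 2)) from by decide,
          W0u β₁ β₂ βbar h₁, W00 β₁ β₂ βbar h₁,
          show ({0}:Finset (Fin 3))ᶜ = {1,2} from by decide,
          sum_pair (by decide : (1:Fin 3) ≠ 2)]
        linarith
      · rw [show (({1}:Finset (Fin 3)).biUnion llgAlloc) = ({1}:Finset (Fin 2)) from by decide,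
          W1u β₁ β₂ βbar h₂, W11 β₁ β₂ βbar h₂,
          show ({1}:Finset (Fin 3))ᶜ = {0,2} from by decide,
          sum_pair (by decide : (0:Fin 3) ≠ 2)]
        linarith
      · rw [show (({2}:Finset (Fin 3)).biUnion llgAlloc) = (∅:Finset (Fin 2)) from by decide,
          W2u β₁ β₂ βbar h₃, W2e, show ({2}:Finset (Fin 3))ᶜ = {0,1} from by decide,
          sum_pair (by decide : (0:Fin 3) ≠ 1)]
        linarith
      · rw [show (({0,1}:Finset (Fin 3)).biUnion llgAlloc) = (univ:Finset (Fin 2)) from by decide,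
          sub_self, show ({0,1}:Finset (Fin 3))ᶜ = {2} from by decide, sum_singleton]
        linarith
      · rw [show (({0,2}:Finset (Fin 3)).biUnion llgAlloc) = ({0}:Finset (Fin 2)) from by decide,
          W02u β₁ β₂ βbar h₁ h₃, W020 β₁ β₂ βbar h₁,
          show ({0,2}:Finset (Fin 3))ᶜ = {1} from by decide, sum_singleton]
        linarith
      · rw [show (({1,2}:Finset (Fin 3)).biUnion llgAlloc) = ({1}:Finset (Fin 2)) from by decide,
          W12u β₁ β₂ βbar h₂ h₃, W121 β₁ β₂ βbar h₂,
          show ({1,2}:Finset (Fin 3))ᶜ = {0} from by decide, sum_singleton]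
        linarith
      · rw [show ((univ:Finset (Fin 3)).biUnion llgAlloc) = (univ:Finset (Fin 2)) from by decide,
          sub_self, show (univ:Finset (Fin 3))ᶜ = ∅ from by decide, sum_empty]
end

/-- Bidder `i`'s VCG payment given bids `b` and allocation `x`. -/
noncomputable def vcgPay (b : Fin 3 → Finset (Fin 2) → ℝ)
    (x : Fin 3 → Finset (Fin 2)) (i : Fin 3) : ℝ :=
  W b (Finset.univ.erase i) Finset.univ
    - W b (Finset.univ.erase i) (Finset.univ \ x i)

/-- In LLG, if the global bidder bids `βbar` on `{0,1}`, the locals make simple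
bids and jointly win (`βbar ≤ β₁ + β₂`), then the VCG-nearest payment (the point
of the minimum-revenue core closest to the VCG payments) of each local bidder `i`
is `(1/2)(VCG_i + min(b_i({i}), βbar))`, with `VCG_i = βbar − min(b_j({j}), βbar)`. -/
theorem stmt1 (β₁ β₂ βbar : ℝ) (h₁ : 0 ≤ β₁) (h₂ : 0 ≤ β₂) (h₃ : 0 ≤ βbar)
    (hwin : βbar ≤ β₁ + β₂) (p : Fin 3 → ℝ)
    (hpcore : inCore (llgBids β₁ β₂ βbar) llgAlloc p)
    (hmin : ∀ q : Fin 3 → ℝ, inCore (llgBids β₁ β₂ βbar) llgAlloc q →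
      ∑ i, p i ≤ ∑ i, q i)
    (hnear : ∀ q : Fin 3 → ℝ, inCore (llgBids β₁ β₂ βbar) llgAlloc q →
      (∑ i, q i = ∑ i, p i) →
      ∑ i, (p i - vcgPay (llgBids β₁ β₂ βbar) llgAlloc i) ^ 2
        ≤ ∑ i, (q i - vcgPay (llgBids β₁ β₂ βbar) llgAlloc i) ^ 2) :
    p 0 = (1 / 2) * ((βbar - min β₂ βbar) + min β₁ βbar) ∧
    p 1 = (1 / 2) * ((βbar - min β₁ βbar) + min β₂ βbar) := by
  have hmm1 : min β₁ βbar + max β₁ βbar = β₁ + βbar := min_add_max β₁ βbar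
  have hmm2 : min β₂ βbar + max β₂ βbar = β₂ + βbar := min_add_max β₂ βbar
  have ha0l : min β₁ βbar ≤ β₁ := min_le_left _ _
  have ha0r : min β₁ βbar ≤ βbar := min_le_right _ _
  have ha1l : min β₂ βbar ≤ β₂ := min_le_left _ _
  have ha1r : min β₂ βbar ≤ βbar := min_le_right _ _
  have ha0n : 0 ≤ min β₁ βbar := le_min h₁ h₃
  have ha1n : 0 ≤ min β₂ βbar := le_min h₂ h₃
  have key : βbar ≤ min β₁ βbar + min β₂ βbar := by
    rcases le_total β₁ βbar with h | h <;> rcases le_total β₂ βbar with h' | h' <;>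
      simp [min_eq_left, min_eq_right, h, h'] <;> linarith
  obtain ⟨c1, c2, c3, c4, c5, c6, c7, c8⟩ :=
    (core_iff β₁ β₂ βbar h₁ h₂ h₃ hwin p).mp hpcore
  -- the candidate point
  set t : Fin 3 → ℝ :=
    ![(βbar - min β₂ βbar + min β₁ βbar) / 2, (βbar - min β₁ βbar + min β₂ βbar) / 2, 0]
    with ht
  have ht0 : t 0 = (βbar - min β₂ βbar + min β₁ βbar) / 2 := rfl
  have ht1 : t 1 = (βbar - min β₁ βbar + min β₂ βbar) / 2 := rfl
  have ht2 : t 2 = 0 := rfl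
  have tcore : inCore (llgBids β₁ β₂ βbar) llgAlloc t := by
    rw [core_iff β₁ β₂ βbar h₁ h₂ h₃ hwin, ht0, ht1, ht2]
    refine ⟨by linarith, by linarith, rfl, by linarith, by linarith, by linarith,
      by linarith, by linarith⟩
  have hsumt : ∑ i, t i = βbar := by
    rw [Fin.sum_univ_three, ht0, ht1, ht2]; ring
  have hsump : p 0 + p 1 = βbar := by
    have := hmin t tcore
    rw [hsumt, Fin.sum_univ_three] at this
    linarith
  have hsumeq : ∑ i, t i = ∑ i, p i := by
    rw [hsumt, Fin.sum_univ_three]; linarith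
  have hq := hnear t tcore hsumeq
  have hv0 : vcgPay (llgBids β₁ β₂ βbar) llgAlloc 0 = max β₂ βbar - β₂ := by
    unfold vcgPay
    rw [show (univ : Finset (Fin 3)).erase 0 = {1,2} from by decide,
      show ((univ : Finset (Fin 2)) \ llgAlloc 0) = {1} from by decide,
      W12u β₁ β₂ βbar h₂ h₃, W121 β₁ β₂ βbar h₂]
  have hv1 : vcgPay (llgBids β₁ β₂ βbar) llgAlloc 1 = max β₁ βbar - β₁ := by
    unfold vcgPay
    rw [show (univ : Finset (Fin 3)).erase 1 = {0,2} from by decide,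
      show ((univ : Finset (Fin 2)) \ llgAlloc 1) = {0} from by decide,
      W02u β₁ β₂ βbar h₁ h₃, W020 β₁ β₂ βbar h₁]
  have hv2 : vcgPay (llgBids β₁ β₂ βbar) llgAlloc 2 = 0 := by
    unfold vcgPay
    rw [show ((univ : Finset (Fin 2)) \ llgAlloc 2) = univ from by decide, sub_self]
  rw [Fin.sum_univ_three, Fin.sum_univ_three, hv0, hv1, hv2, ht0, ht1, ht2] at hq
  rw [show max β₂ βbar - β₂ = βbar - min β₂ βbar by linarith,
    show max β₁ βbar - β₁ = βbar - min β₁ βbar by linarith] at hq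
  -- abbreviations
  have hA : (p 0 - (βbar - min β₂ βbar)) + (p 1 - (βbar - min β₁ βbar))
      = min β₁ βbar + min β₂ βbar - βbar := by linarith
  have hA2 : ((p 0 - (βbar - min β₂ βbar)) + (p 1 - (βbar - min β₁ βbar))) ^ 2
      = (min β₁ βbar + min β₂ βbar - βbar) ^ 2 := by rw [hA]
  have hd : ((p 0 - (βbar - min β₂ βbar)) - (p 1 - (βbar - min β₁ βbar))) ^ 2 ≤ 0 := by
    linarith [hq, hA2, sq_nonneg (p 2)]
  have hd0 : (p 0 - (βbar - min β₂ βbar)) - (p 1 - (βbar - min β₁ βbar)) = 0 := by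
    have h' := le_antisymm hd (sq_nonneg _)
    exact pow_eq_zero_iff (two_ne_zero) |>.mp h'
  constructor <;> linarith
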